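/- For the set B = {(t,-t) : t < 0} ∪ {(1/n, 1/n) : n ∈ ℕ, n ≥ 1} ⊆ ℝ², the upper tangent cone and the lower tangent cone of B at the origin both equal {(t, |t|) : t ∈ ℝ}. -/

import Mathlib

open Filter Metric Topology

/-- Lower tangent cone: `v ∈ Tan⁻(F,x)` iff `lim_{t→0⁺} (1/t) d(x+t•v,F) = 0`. -/
def lowerTangentCone (F : Set (ℝ × ℝ)) (x : ℝ × ℝ) : Set (ℝ × ℝ) :=
  {v | Filter.Tendsto (fun t : ℝ => t⁻¹ * Metric.infDist (x + t • v) F) (𝓝[>] (0:ℝ)) (𝓝 0)}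

/-- Upper tangent cone: `v ∈ Tan⁺(F,x)` iff `liminf_{t→0⁺} (1/t) d(x+t•v,F) = 0`. -/
def upperTangentCone (F : Set (ℝ × ℝ)) (x : ℝ × ℝ) : Set (ℝ × ℝ) :=
  {v | Filter.liminf (fun t : ℝ => t⁻¹ * Metric.infDist (x + t • v) F) (𝓝[>] (0:ℝ)) = 0}

/-- The example set. -/
def Bset : Set (ℝ × ℝ) :=
  {p | ∃ t : ℝ, t < 0 ∧ p = (t, -t)} ∪
  {p | ∃ n : ℕ, 1 ≤ n ∧ p = ((1 : ℝ) / n, (1 : ℝ) / n)}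

lemma Bset_nonempty : Bset.Nonempty :=
  ⟨((1:ℝ), (1:ℝ)), Or.inr ⟨1, le_refl 1, by norm_num⟩⟩

lemma smul_pair (t a b : ℝ) : t • ((a, b) : ℝ × ℝ) = (t * a, t * b) := rfl

lemma pt_eq (t a b : ℝ) : ((0, 0) : ℝ × ℝ) + t • ((a, b) : ℝ × ℝ) = (t * a, t * b) := by
  rw [smul_pair]; ext <;> simp

lemma zero_mem_closure_Bset : ((0:ℝ), (0:ℝ)) ∈ closure Bset := by
  have h : Tendsto (fun n : ℕ => ((1 / ((n:ℝ) + 1), 1 / ((n:ℝ) + 1)) : ℝ × ℝ))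
      atTop (𝓝 ((0:ℝ), (0:ℝ))) :=
    tendsto_one_div_add_atTop_nhds_zero_nat.prodMk_nhds
      tendsto_one_div_add_atTop_nhds_zero_nat
  refine mem_closure_of_tendsto h ?_
  filter_upwards with n
  exact Or.inr ⟨n + 1, by omega, by push_cast; ring_nf⟩

lemma lower_neg (a : ℝ) (ha : a ≤ 0) : (a, -a) ∈ lowerTangentCone Bset (0, 0) := by
  have key : ∀ t : ℝ, 0 < t →
      Metric.infDist (((0,0) : ℝ×ℝ) + t • ((a, -a) : ℝ×ℝ)) Bset = 0 := by
    intro t ht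
    rw [pt_eq]
    rcases lt_or_eq_of_le ha with h | h
    · apply Metric.infDist_zero_of_mem
      exact Or.inl ⟨t * a, by nlinarith, by rw [mul_neg]⟩
    · subst h
      simp only [mul_zero, neg_zero]
      rw [← Metric.infDist_closure]
      exact Metric.infDist_zero_of_mem zero_mem_closure_Bset
  have heq : (fun t : ℝ => t⁻¹ * Metric.infDist (((0,0):ℝ×ℝ) + t • ((a,-a):ℝ×ℝ)) Bset)
      =ᶠ[𝓝[>] (0:ℝ)] fun _ => (0:ℝ) := by
    filter_upwards [self_mem_nhdsWithin] with t ht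
    rw [key t ht, mul_zero]
  exact Tendsto.congr' heq.symm tendsto_const_nhds

lemma approx (s : ℝ) (hs0 : 0 < s) (hs1 : s ≤ 1) :
    ∃ n : ℕ, 1 ≤ n ∧ |s - 1 / (n : ℝ)| ≤ s ^ 2 := by
  refine ⟨⌈1 / s⌉₊, Nat.one_le_ceil_iff.mpr (by positivity), ?_⟩
  set N : ℝ := (⌈1 / s⌉₊ : ℝ) with hNdef
  have hN1 : 1 / s ≤ N := Nat.le_ceil _
  have hN2 : N < 1 / s + 1 := Nat.ceil_lt_add_one (by positivity)
  have hNpos : 0 < N := lt_of_lt_of_le (by positivity) hN1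
  have hinv : 1 / N ≤ s := by
    rw [div_le_iff₀ hNpos]
    have : 1 / s * s = 1 := by field_simp
    nlinarith
  have hlow : s - 1 / N ≤ s ^ 2 := by
    have h1 : s * N < 1 + s := by
      have : (1 / s) * s = 1 := by field_simp
      nlinarith
    have h2 : (1 / N) * N = 1 := by field_simp
    nlinarith
  rw [abs_le]
  constructor
  · nlinarith
  · exact hlow

lemma lower_pos (a : ℝ) (ha : 0 < a) : (a, a) ∈ lowerTangentCone Bset (0, 0) := by
  have bound : ∀ t : ℝ, 0 < t → t ≤ 1 / a →
      Metric.infDist (((0,0):ℝ×ℝ) + t • ((a,a):ℝ×ℝ)) Bset ≤ a ^ 2 * t ^ 2 := by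
    intro t ht hta
    have hs1 : t * a ≤ 1 := (le_div_iff₀ ha).mp hta
    obtain ⟨n, hn1, hn2⟩ := approx (t * a) (by positivity) hs1
    rw [pt_eq]
    calc Metric.infDist ((t*a, t*a) : ℝ×ℝ) Bset
        ≤ dist ((t*a, t*a) : ℝ×ℝ) ((1/(n:ℝ), 1/(n:ℝ)) : ℝ×ℝ) :=
          Metric.infDist_le_dist_of_mem (Or.inr ⟨n, hn1, rfl⟩)
      _ = |t * a - 1 / (n:ℝ)| := by
          rw [Prod.dist_eq, Real.dist_eq]; simp
      _ ≤ (t * a) ^ 2 := hn2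
      _ = a ^ 2 * t ^ 2 := by ring
  apply squeeze_zero' (g := fun t : ℝ => a ^ 2 * t)
  · filter_upwards [self_mem_nhdsWithin] with t ht
    exact mul_nonneg (inv_nonneg.mpr (le_of_lt ht)) Metric.infDist_nonneg
  · have hmem : {t : ℝ | t < 1 / a} ∈ 𝓝[>] (0:ℝ) :=
      mem_nhdsWithin_of_mem_nhds (gt_mem_nhds (by positivity))
    filter_upwards [self_mem_nhdsWithin, hmem] with t ht hlt
    have h1 := bound t ht (le_of_lt hlt)
    calc t⁻¹ * Metric.infDist (((0,0):ℝ×ℝ) + t • ((a,a):ℝ×ℝ)) Bset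
        ≤ t⁻¹ * (a ^ 2 * t ^ 2) := by
          apply mul_le_mul_of_nonneg_left h1 (inv_nonneg.mpr (le_of_lt ht))
      _ = a ^ 2 * t := by
          have htne : t ≠ 0 := ne_of_gt ht
          field_simp
  · have : Tendsto (fun t : ℝ => a ^ 2 * t) (𝓝 (0:ℝ)) (𝓝 (a ^ 2 * 0)) :=
      (continuous_const.mul continuous_id).tendsto 0
    rw [mul_zero] at this
    exact this.mono_left nhdsWithin_le_nhds

lemma upper_sub : ∀ v ∈ upperTangentCone Bset (0, 0), ∃ t : ℝ, v = (t, |t|) := by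
  rintro ⟨a, b⟩ hv
  by_contra hne
  push_neg at hne
  have hba : b ≠ |a| := fun h => hne a (by rw [h])
  obtain ⟨c, hc, hcb⟩ : ∃ c : ℝ, 0 < c ∧ ∀ t : ℝ, 0 < t → ∀ q ∈ Bset,
      c * t ≤ dist ((t * a, t * b) : ℝ × ℝ) q := by
    rcases eq_or_ne b a with hb | hb1
    · -- b = a, then since b ≠ |a| we must have a < 0
      subst hb
      have haneg : b < 0 := by
        rcases lt_trichotomy b 0 with h | h | h
        · exact h
        · exact absurd (by rw [h, abs_zero]) hba
        · exact absurd (abs_of_pos h).symm hba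
      refine ⟨-b, by linarith, ?_⟩
      rintro t ht q (⟨u, hu, rfl⟩ | ⟨n, hn, rfl⟩)
      · rw [Prod.dist_eq]
        refine le_max_of_le_right ?_
        rw [Real.dist_eq]
        have h1 : t * b - -u < 0 ∨ 0 ≤ t * b - -u := lt_or_ge _ _
        have : -b * t ≤ |t * b - -u| := by
          have hneg : t * b - -u ≤ t * b := by nlinarith
          rcases abs_cases (t * b - -u) with ⟨he, _⟩ | ⟨he, _⟩ <;> nlinarith
        exact this
      · rw [Prod.dist_eq]
        refine le_max_of_le_left ?_
        rw [Real.dist_eq]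
        have hnp : (0:ℝ) < 1 / (n:ℝ) := by
          have : (1:ℝ) ≤ (n:ℝ) := by exact_mod_cast hn
          positivity
        have : t * b - 1 / (n:ℝ) < 0 := by nlinarith
        rw [abs_of_neg this]; nlinarith
    rcases eq_or_ne b (-a) with hb | hb2
    · -- b = -a, then since b ≠ |a| we must have a > 0
      subst hb
      have hapos : 0 < a := by
        rcases lt_trichotomy a 0 with h | h | h
        · exact absurd (abs_of_neg h).symm hba
        · exact absurd (by rw [h, neg_zero, abs_zero]) hba
        · exact h
      refine ⟨a, hapos, ?_⟩
      rintro t ht q (⟨u, hu, rfl⟩ | ⟨n, hn, rfl⟩)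
      · rw [Prod.dist_eq]
        refine le_max_of_le_left ?_
        rw [Real.dist_eq]
        have : 0 < t * a - u := by nlinarith
        calc a * t ≤ t * a - u := by nlinarith
          _ ≤ |t * a - u| := le_abs_self _
      · rw [Prod.dist_eq]
        refine le_max_of_le_right ?_
        rw [Real.dist_eq]
        have hnp : (0:ℝ) < 1 / (n:ℝ) := by
          have : (1:ℝ) ≤ (n:ℝ) := by exact_mod_cast hn
          positivity
        have : t * -a - 1 / (n:ℝ) < 0 := by nlinarith
        rw [abs_of_neg this]; nlinarith
    · -- general case: b ≠ a and b ≠ -a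
      have h1 : 0 < |a + b| := by
        rw [abs_pos]
        intro h
        exact hb2 (by linarith)
      have h2 : 0 < |a - b| := by
        rw [abs_pos]
        intro h
        exact hb1 (by linarith)
      refine ⟨min (|a + b| / 2) (|a - b| / 2), lt_min (by linarith) (by linarith), ?_⟩
      rintro t ht q (⟨u, hu, rfl⟩ | ⟨n, hn, rfl⟩)
      · rw [Prod.dist_eq, Real.dist_eq, Real.dist_eq]
        have habs : t * |a + b| ≤ |t * a - u| + |t * b - -u| := by
          have h3 := abs_add_le (t * a - u) (t * b - -u)
          have h4 : t * a - u + (t * b - -u) = t * (a + b) := by ring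
          rw [h4] at h3
          rw [abs_mul, abs_of_pos ht] at h3
          exact h3
        have hA := le_max_left |t * a - u| |t * b - -u|
        have hB := le_max_right |t * a - u| |t * b - -u|
        have hmin : min (|a + b| / 2) (|a - b| / 2) ≤ |a + b| / 2 := min_le_left _ _
        have := mul_le_mul_of_nonneg_right hmin (le_of_lt ht)
        nlinarith
      · rw [Prod.dist_eq, Real.dist_eq, Real.dist_eq]
        have habs : t * |a - b| ≤ |t * a - 1/(n:ℝ)| + |t * b - 1/(n:ℝ)| := by
          have h3 : |t * (a - b)| ≤ |t * a - 1/(n:ℝ)| + |t * b - 1/(n:ℝ)| := by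
            have h4 : t * (a - b) = (t * a - 1/(n:ℝ)) - (t * b - 1/(n:ℝ)) := by ring
            rw [h4]
            exact abs_sub _ _
          rwa [abs_mul, abs_of_pos ht] at h3
        have hA := le_max_left |t * a - 1/(n:ℝ)| |t * b - 1/(n:ℝ)|
        have hB := le_max_right |t * a - 1/(n:ℝ)| |t * b - 1/(n:ℝ)|
        have hmin : min (|a + b| / 2) (|a - b| / 2) ≤ |a - b| / 2 := min_le_right _ _
        have := mul_le_mul_of_nonneg_right hmin (le_of_lt ht)
        nlinarith
  -- f is bounded above, giving coboundedness
  have hub : ∀ᶠ t in 𝓝[>] (0:ℝ),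
      t⁻¹ * Metric.infDist (((0,0):ℝ×ℝ) + t • ((a,b):ℝ×ℝ)) Bset ≤ max |a| |b| := by
    filter_upwards [self_mem_nhdsWithin] with t ht
    have h1 : Metric.infDist (((0,0):ℝ×ℝ) + t • ((a,b):ℝ×ℝ)) Bset ≤
        dist (((0,0):ℝ×ℝ) + t • ((a,b):ℝ×ℝ)) ((0,0) : ℝ×ℝ) := by
      rw [← Metric.infDist_closure]
      exact Metric.infDist_le_dist_of_mem zero_mem_closure_Bset
    have h2 : dist (((0,0):ℝ×ℝ) + t • ((a,b):ℝ×ℝ)) ((0,0) : ℝ×ℝ) = t * max |a| |b| := by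
      rw [pt_eq, Prod.dist_eq, Real.dist_eq, Real.dist_eq]
      simp only [sub_zero, abs_mul, abs_of_pos (show (0:ℝ) < t from ht)]
      rw [mul_max_of_nonneg _ _ (le_of_lt ht)]
    rw [h2] at h1
    rw [inv_mul_le_iff₀ ht]
    linarith [h1]
  have hlb : ∀ᶠ t in 𝓝[>] (0:ℝ),
      c ≤ t⁻¹ * Metric.infDist (((0,0):ℝ×ℝ) + t • ((a,b):ℝ×ℝ)) Bset := by
    filter_upwards [self_mem_nhdsWithin] with t ht
    have h1 : c * t ≤ Metric.infDist ((t*a, t*b) : ℝ×ℝ) Bset := by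
      by_contra h
      push_neg at h
      obtain ⟨q, hq, hdq⟩ := (Metric.infDist_lt_iff Bset_nonempty).mp h
      exact absurd hdq (not_lt.mpr (hcb t ht q hq))
    rw [pt_eq]
    rw [le_inv_mul_iff₀ ht]
    linarith [h1]
  have hco : Filter.IsCoboundedUnder (· ≥ ·) (𝓝[>] (0:ℝ))
      (fun t : ℝ => t⁻¹ * Metric.infDist (((0,0):ℝ×ℝ) + t • ((a,b):ℝ×ℝ)) Bset) :=
    Filter.IsBoundedUnder.isCoboundedUnder_ge ⟨max |a| |b|, hub⟩
  have hle := Filter.le_liminf_of_le hco hlb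
  rw [hv] at hle
  linarith

theorem tangentCones_aubin_frankowska_example :
    let B : Set (ℝ × ℝ) :=
      {p | ∃ t : ℝ, t < 0 ∧ p = (t, -t)} ∪
      {p | ∃ n : ℕ, 1 ≤ n ∧ p = ((1 : ℝ) / n, (1 : ℝ) / n)}
    upperTangentCone B (0, 0) = {p : ℝ × ℝ | ∃ t : ℝ, p = (t, |t|)} ∧
    lowerTangentCone B (0, 0) = {p : ℝ × ℝ | ∃ t : ℝ, p = (t, |t|)} := by
  intro B
  show upperTangentCone Bset (0, 0) = _ ∧ lowerTangentCone Bset (0, 0) = _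
  have hS : {p : ℝ × ℝ | ∃ t : ℝ, p = (t, |t|)} ⊆ lowerTangentCone Bset (0, 0) := by
    rintro p ⟨t, rfl⟩
    rcases le_or_gt t 0 with h | h
    · have := lower_neg t h
      rwa [abs_of_nonpos h]
    · have := lower_pos t h
      rwa [abs_of_pos h]
  have hlu : lowerTangentCone Bset (0, 0) ⊆ upperTangentCone Bset (0, 0) := by
    intro v hv
    exact hv.liminf_eq
  have hus : upperTangentCone Bset (0, 0) ⊆ {p : ℝ × ℝ | ∃ t : ℝ, p = (t, |t|)} := upper_sub
  exact ⟨Set.Subset.antisymm hus (hS.trans hlu),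
    Set.Subset.antisymm (hlu.trans hus) hS⟩
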